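/- Positivity of the explicit Euler step for truncated data: let ν > 0, R > 0, let f ≥ 0 be integrable on ℝ^d with 𝔐₀[f·χ_R] > 0, and set f_R = χ_R·f, where χ_R is the indicator of the ball of radius R centered at the origin. Then for every h with 0 < h < 1/(2(4R + 2νR²)), the function w_R = f + h·(Q[f_R] − 2ν|k|² f_R) is nonnegative pointwise on ℝ^d. -/

import Mathlib

noncomputable section
open MeasureTheory Filter Set Real

abbrev Sp (d : ℕ) : Type := EuclideanSpace ℝ (Fin d)

/-- Dispersion relation ω_k = √(λ1 + λ2 |k|²). -/
def omg (l1 l2 : ℝ) {d : ℕ} (k : Sp d) : ℝ := Real.sqrt (l1 + l2 * ‖k‖ ^ 2)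

/-- Zeroth moment 𝔐₀[f] = ∫ f. -/
def M0 {d : ℕ} (f : Sp d → ℝ) : ℝ := ∫ k, f k

/-- Resonance broadening Γ_{k,k1,k2}[f]. -/
def Gam {d : ℕ} (f : Sp d → ℝ) (k k1 k2 : Sp d) : ℝ :=
  (‖k‖ ^ 2 + ‖k1‖ ^ 2 + ‖k2‖ ^ 2) * M0 f

/-- Lorentzian L_f(ζ; k,k1,k2) = Γ/(ζ² + Γ²). -/
def Lor {d : ℕ} (f : Sp d → ℝ) (z : ℝ) (k k1 k2 : Sp d) : ℝ :=
  Gam f k k1 k2 / (z ^ 2 + Gam f k k1 k2 ^ 2)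

/-- Collision kernel |V_{k,k1,k2}|² = |k||k1||k2|. -/
def Vsq {d : ℕ} (k k1 k2 : Sp d) : ℝ := ‖k‖ * ‖k1‖ * ‖k2‖

/-- Collision operator Q[f] after eliminating the Dirac delta enforcing k = k1 + k2. -/
def Qop (l1 l2 : ℝ) {d : ℕ} (f : Sp d → ℝ) (k : Sp d) : ℝ :=
  (∫ k1, Vsq k k1 (k - k1) *
      Lor f (omg l1 l2 k - omg l1 l2 k1 - omg l1 l2 (k - k1)) k k1 (k - k1) *
      (f k1 * f (k - k1) - f k * f k1 - f k * f (k - k1)))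
  - 2 * ∫ k2, Vsq (k + k2) k k2 *
      Lor f (omg l1 l2 (k + k2) - omg l1 l2 k - omg l1 l2 k2) (k + k2) k k2 *
      (f k * f k2 - f k * f (k + k2) - f (k + k2) * f k2)

/-- Weighted L¹ norm ‖g‖_{L¹_N} = ∫ |g| ω^N. -/
def wnorm (l1 l2 N : ℝ) {d : ℕ} (g : Sp d → ℝ) : ℝ := ∫ k, |g k| * omg l1 l2 k ^ N

/-- N-th moment 𝔐_N[g] = ∫ ω^N g. -/
def Mom (l1 l2 N : ℝ) {d : ℕ} (g : Sp d → ℝ) : ℝ := ∫ k, omg l1 l2 k ^ N * g k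

lemma Lor_nonneg {d : ℕ} (g : Sp d → ℝ) (hM : 0 ≤ M0 g) (z : ℝ) (k k1 k2 : Sp d) :
    0 ≤ Lor g z k k1 k2 := by
  unfold Lor Gam
  apply div_nonneg
  · exact mul_nonneg (by positivity) hM
  · positivity

/-- Bound by the first argument: Vsq·Lor ≤ ‖k‖/(2 M₀). -/
lemma vsq_lor_le_fst {d : ℕ} (g : Sp d → ℝ) (hM : 0 < M0 g) (z : ℝ) (k k1 k2 : Sp d) :
    Vsq k k1 k2 * Lor g z k k1 k2 ≤ ‖k‖ / (2 * M0 g) := by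
  by_cases h12 : ‖k1‖ * ‖k2‖ = 0
  · have : Vsq k k1 k2 = 0 := by unfold Vsq; rw [mul_assoc, h12, mul_zero]
    rw [this, zero_mul]
    positivity
  · have h1 : 0 < ‖k1‖ := lt_of_le_of_ne (norm_nonneg _)
      (fun hc => h12 (by rw [← hc, zero_mul]))
    have h2 : 0 < ‖k2‖ := lt_of_le_of_ne (norm_nonneg _)
      (fun hc => h12 (by rw [← hc, mul_zero]))
    have hG : 0 < Gam g k k1 k2 := by unfold Gam; exact mul_pos (by positivity) hM
    have hL : Lor g z k k1 k2 ≤ 1 / Gam g k k1 k2 := by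
      unfold Lor
      rw [div_le_div_iff₀ (by positivity) hG]
      nlinarith [sq_nonneg z]
    have hV : 0 ≤ Vsq k k1 k2 := by unfold Vsq; positivity
    calc Vsq k k1 k2 * Lor g z k k1 k2 ≤ Vsq k k1 k2 * (1 / Gam g k k1 k2) :=
          mul_le_mul_of_nonneg_left hL hV
      _ = Vsq k k1 k2 / Gam g k k1 k2 := by ring
      _ ≤ ‖k‖ / (2 * M0 g) := by
          rw [div_le_div_iff₀ hG (by positivity)]
          unfold Vsq Gam
          nlinarith [mul_nonneg (mul_nonneg (norm_nonneg k) hM.le) (sq_nonneg (‖k1‖ - ‖k2‖)),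
            mul_nonneg (mul_nonneg (norm_nonneg k) hM.le) (sq_nonneg ‖k‖)]

/-- Bound by the middle argument: Vsq·Lor ≤ ‖k1‖/(2 M₀). -/
lemma vsq_lor_le_snd {d : ℕ} (g : Sp d → ℝ) (hM : 0 < M0 g) (z : ℝ) (k k1 k2 : Sp d) :
    Vsq k k1 k2 * Lor g z k k1 k2 ≤ ‖k1‖ / (2 * M0 g) := by
  by_cases h12 : ‖k‖ * ‖k2‖ = 0
  · have : Vsq k k1 k2 = 0 := by
      unfold Vsq
      rcases mul_eq_zero.mp h12 with h | h <;> rw [h] <;> ring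
    rw [this, zero_mul]
    positivity
  · have h1 : 0 < ‖k‖ := lt_of_le_of_ne (norm_nonneg _)
      (fun hc => h12 (by rw [← hc, zero_mul]))
    have h2 : 0 < ‖k2‖ := lt_of_le_of_ne (norm_nonneg _)
      (fun hc => h12 (by rw [← hc, mul_zero]))
    have hG : 0 < Gam g k k1 k2 := by unfold Gam; exact mul_pos (by positivity) hM
    have hL : Lor g z k k1 k2 ≤ 1 / Gam g k k1 k2 := by
      unfold Lor
      rw [div_le_div_iff₀ (by positivity) hG]
      nlinarith [sq_nonneg z]
    have hV : 0 ≤ Vsq k k1 k2 := by unfold Vsq; positivity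
    calc Vsq k k1 k2 * Lor g z k k1 k2 ≤ Vsq k k1 k2 * (1 / Gam g k k1 k2) :=
          mul_le_mul_of_nonneg_left hL hV
      _ = Vsq k k1 k2 / Gam g k k1 k2 := by ring
      _ ≤ ‖k1‖ / (2 * M0 g) := by
          rw [div_le_div_iff₀ hG (by positivity)]
          unfold Vsq Gam
          nlinarith [mul_nonneg (mul_nonneg (norm_nonneg k1) hM.le) (sq_nonneg (‖k‖ - ‖k2‖)),
            mul_nonneg (mul_nonneg (norm_nonneg k1) hM.le) (sq_nonneg ‖k1‖)]

/-- The collision operator is bounded below by minus the loss bound 2‖k‖ g(k). -/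
lemma Qop_lower {d : ℕ} (l1 l2 : ℝ) (g : Sp d → ℝ) (hg : ∀ k, 0 ≤ g k)
    (hgi : Integrable g) (hM : 0 < M0 g) (k : Sp d) :
    -(2 * ‖k‖ * g k) ≤ Qop l1 l2 g k := by
  set c := ‖k‖ / (2 * M0 g) with hc
  have hc0 : 0 ≤ c := by positivity
  have hMne : M0 g ≠ 0 := ne_of_gt hM
  -- first integral
  set φ1 := fun k1 => Vsq k k1 (k - k1) *
      Lor g (omg l1 l2 k - omg l1 l2 k1 - omg l1 l2 (k - k1)) k k1 (k - k1) *
      (g k1 * g (k - k1) - g k * g k1 - g k * g (k - k1)) with hφ1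
  set ψ := fun k1 => -(c * (g k * g k1 + g k * g (k - k1))) with hψ
  have hψi : Integrable ψ := by
    apply Integrable.neg
    exact ((hgi.const_mul (g k)).add ((hgi.comp_sub_left k).const_mul (g k))).const_mul c
  have hψint : ∫ k1, ψ k1 = -(‖k‖ * g k) := by
    rw [hψ]
    rw [integral_neg, integral_const_mul, integral_add (hgi.const_mul (g k))
      ((hgi.comp_sub_left k).const_mul (g k)), integral_const_mul, integral_const_mul,
      integral_sub_left_eq_self g volume k]
    show -(c * (g k * M0 g + g k * M0 g)) = -(‖k‖ * g k)
    rw [hc]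
    field_simp
    ring
  have hpt1 : ∀ k1, ψ k1 ≤ φ1 k1 := by
    intro k1
    have hA0 : 0 ≤ Vsq k k1 (k - k1) *
        Lor g (omg l1 l2 k - omg l1 l2 k1 - omg l1 l2 (k - k1)) k k1 (k - k1) :=
      mul_nonneg (by unfold Vsq; positivity) (Lor_nonneg g hM.le _ _ _ _)
    have hAc := vsq_lor_le_fst g hM (omg l1 l2 k - omg l1 l2 k1 - omg l1 l2 (k - k1)) k k1 (k - k1)
    rw [← hc] at hAc
    have hL0 : 0 ≤ g k * g k1 + g k * g (k - k1) :=
      add_nonneg (mul_nonneg (hg k) (hg k1)) (mul_nonneg (hg k) (hg (k - k1)))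
    have hP0 : 0 ≤ g k1 * g (k - k1) := mul_nonneg (hg k1) (hg (k - k1))
    simp only [hψ, hφ1]
    nlinarith [mul_le_mul_of_nonneg_right hAc hL0, mul_nonneg hA0 hP0]
  have hI1 : -(‖k‖ * g k) ≤ ∫ k1, φ1 k1 := by
    by_cases hint : Integrable φ1
    · rw [← hψint]; exact integral_mono hψi hint hpt1
    · rw [integral_undef hint]
      have : 0 ≤ ‖k‖ * g k := mul_nonneg (norm_nonneg k) (hg k)
      linarith
  -- second integral
  set φ2 := fun k2 => Vsq (k + k2) k k2 *
      Lor g (omg l1 l2 (k + k2) - omg l1 l2 k - omg l1 l2 k2) (k + k2) k k2 *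
      (g k * g k2 - g k * g (k + k2) - g (k + k2) * g k2) with hφ2
  set χ := fun k2 => c * (g k * g k2) with hχ
  have hχi : Integrable χ := (hgi.const_mul (g k)).const_mul c
  have hχint : ∫ k2, χ k2 = ‖k‖ * g k / 2 := by
    rw [hχ, integral_const_mul, integral_const_mul]
    show c * (g k * M0 g) = _
    rw [hc]; field_simp
  have hpt2 : ∀ k2, φ2 k2 ≤ χ k2 := by
    intro k2
    have hA0 : 0 ≤ Vsq (k + k2) k k2 *
        Lor g (omg l1 l2 (k + k2) - omg l1 l2 k - omg l1 l2 k2) (k + k2) k k2 :=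
      mul_nonneg (by unfold Vsq; positivity) (Lor_nonneg g hM.le _ _ _ _)
    have hAc := vsq_lor_le_snd g hM (omg l1 l2 (k + k2) - omg l1 l2 k - omg l1 l2 k2) (k + k2) k k2
    rw [← hc] at hAc
    have hP0 : 0 ≤ g k * g k2 := mul_nonneg (hg k) (hg k2)
    have hN0 : 0 ≤ g k * g (k + k2) + g (k + k2) * g k2 :=
      add_nonneg (mul_nonneg (hg k) (hg (k + k2))) (mul_nonneg (hg (k + k2)) (hg k2))
    simp only [hφ2, hχ]
    nlinarith [mul_le_mul_of_nonneg_right hAc hP0, mul_nonneg hA0 hN0]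
  have hI2 : (∫ k2, φ2 k2) ≤ ‖k‖ * g k / 2 := by
    by_cases hint : Integrable φ2
    · rw [← hχint]; exact integral_mono hint hχi hpt2
    · rw [integral_undef hint]
      have : 0 ≤ ‖k‖ * g k := mul_nonneg (norm_nonneg k) (hg k)
      linarith
  have hQ : Qop l1 l2 g k = (∫ k1, φ1 k1) - 2 * ∫ k2, φ2 k2 := rfl
  rw [hQ]
  linarith

/-- Positivity of the explicit Euler step for truncated data: for ν, R > 0,
f ≥ 0 integrable with 𝔐₀[f·χ_R] > 0, setting f_R = χ_R·f, for every
0 < h < 1/(2(4R + 2νR²)) the function w_R = f + h(Q[f_R] − 2ν|k|²f_R) is nonnegative. -/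
theorem euler_step_positivity {d : ℕ} (hd : 2 ≤ d) (l1 l2 ν R : ℝ) (hl1 : 0 < l1)
    (hl2 : 0 < l2) (hν : 0 < ν) (hR : 0 < R) (f : Sp d → ℝ) (hf : ∀ k, 0 ≤ f k)
    (hfi : Integrable f)
    (hM : 0 < M0 (Set.indicator (Metric.ball (0 : Sp d) R) f))
    (h : ℝ) (hh0 : 0 < h) (hh : h < 1 / (2 * (4 * R + 2 * ν * R ^ 2))) :
    ∀ k : Sp d,
      0 ≤ f k + h * (Qop l1 l2 (Set.indicator (Metric.ball (0 : Sp d) R) f) k -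
        2 * ν * ‖k‖ ^ 2 * Set.indicator (Metric.ball (0 : Sp d) R) f k) := by
  intro k
  set g := Set.indicator (Metric.ball (0 : Sp d) R) f with hgdef
  have hg : ∀ k, 0 ≤ g k := fun k => Set.indicator_nonneg (fun x _ => hf x) k
  have hgi : Integrable g := hfi.indicator measurableSet_ball
  have hQ := Qop_lower l1 l2 g hg hgi hM k
  have hgle : g k ≤ f k := Set.indicator_le_self' (fun x _ => hf x) k
  have e2 : ‖k‖ * g k ≤ R * g k := by
    by_cases hk : k ∈ Metric.ball (0 : Sp d) R
    · have : ‖k‖ < R := by simpa [mem_ball_zero_iff] using hk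
      exact mul_le_mul_of_nonneg_right this.le (hg k)
    · rw [hgdef]; simp [Set.indicator_of_notMem hk]
  have e3 : ‖k‖ ^ 2 * g k ≤ R ^ 2 * g k := by
    by_cases hk : k ∈ Metric.ball (0 : Sp d) R
    · have hlt : ‖k‖ < R := by simpa [mem_ball_zero_iff] using hk
      have : ‖k‖ ^ 2 ≤ R ^ 2 := by nlinarith [norm_nonneg k]
      exact mul_le_mul_of_nonneg_right this (hg k)
    · rw [hgdef]; simp [Set.indicator_of_notMem hk]
  have hC : (0 : ℝ) < 4 * R + 2 * ν * R ^ 2 := by positivity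
  have hhb : h * (4 * R + 2 * ν * R ^ 2) < 1 / 2 := by
    rw [lt_div_iff₀ (by positivity : (0:ℝ) < 2 * (4 * R + 2 * ν * R ^ 2))] at hh
    nlinarith
  -- combine
  have comb : -((2 * R + 2 * ν * R ^ 2) * g k) ≤
      Qop l1 l2 g k - 2 * ν * ‖k‖ ^ 2 * g k := by
    nlinarith [hQ, e2, mul_le_mul_of_nonneg_left e3 hν.le]
  have hcomb := mul_le_mul_of_nonneg_left comb hh0.le
  have u : (2 * R + 2 * ν * R ^ 2) * g k ≤ (4 * R + 2 * ν * R ^ 2) * f k := by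
    nlinarith [mul_le_mul_of_nonneg_left hgle (show (0:ℝ) ≤ 2 * R + 2 * ν * R ^ 2 by positivity),
      mul_nonneg hR.le (hf k)]
  have t1 := mul_le_mul_of_nonneg_left u hh0.le
  have t2 : h * ((4 * R + 2 * ν * R ^ 2) * f k) ≤ 1 / 2 * f k := by
    nlinarith [mul_le_mul_of_nonneg_right hhb.le (hf k)]
  nlinarith [hf k, hcomb, t1, t2]
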